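/- If T is a weakly mixing and multiply recurrent continuous linear operator on a separable Fréchet space, then T ⊕ T acting on X × X is AP-hypercyclic; that is, for all nonempty open sets U₁, U₂, V₁, V₂ and every m there exist x₁ ∈ U₁, x₂ ∈ U₂ and a, k ∈ ℕ such that T^{a+jk} x₁ ∈ V₁ and T^{a+jk} x₂ ∈ V₂ for all 0 ≤ j ≤ m. -/

import Mathlib

open Filter Topology

theorem weaklyMixing_multiplyRecurrent_implies_sum_AP_hypercyclic
    {X : Type*} [AddCommGroup X] [Module ℝ X] [UniformSpace X] [IsUniformAddGroup X]
    [ContinuousSMul ℝ X] [LocallyConvexSpace ℝ X] [CompleteSpace X]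
    [TopologicalSpace.MetrizableSpace X] [TopologicalSpace.SeparableSpace X]
    (T : X →L[ℝ] X)
    (hwm : ∀ U₁ U₂ V₁ V₂ : Set X, IsOpen U₁ → U₁.Nonempty → IsOpen U₂ → U₂.Nonempty →
        IsOpen V₁ → V₁.Nonempty → IsOpen V₂ → V₂.Nonempty →
        ∃ n : ℕ, (∃ x ∈ U₁, (T ^ n) x ∈ V₁) ∧ ∃ x ∈ U₂, (T ^ n) x ∈ V₂)
    (hmr : ∀ U : Set X, IsOpen U → U.Nonempty → ∀ m : ℕ,
        ∃ k : ℕ, 1 ≤ k ∧ ∃ x ∈ U, ∀ j ≤ m, (T ^ (j * k)) x ∈ U) :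
    ∀ U₁ U₂ V₁ V₂ : Set X, IsOpen U₁ → U₁.Nonempty → IsOpen U₂ → U₂.Nonempty →
      IsOpen V₁ → V₁.Nonempty → IsOpen V₂ → V₂.Nonempty → ∀ m : ℕ,
      ∃ x₁ ∈ U₁, ∃ x₂ ∈ U₂, ∃ a k : ℕ, 1 ≤ k ∧
        ∀ j ≤ m, (T ^ (a + j * k)) x₁ ∈ V₁ ∧ (T ^ (a + j * k)) x₂ ∈ V₂ := by
  intro U₁ U₂ V₁ V₂ hU₁ hU₁ne hU₂ hU₂ne hV₁ hV₁ne hV₂ hV₂ne m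
  -- Step 1: find n with V₁ ∩ (T^n)⁻¹ V₂ nonempty
  obtain ⟨n, ⟨x, hxV₁, hxV₂⟩, -⟩ :=
    hwm V₁ V₁ V₂ V₂ hV₁ hV₁ne hV₁ hV₁ne hV₂ hV₂ne hV₂ hV₂ne
  set W : Set X := V₁ ∩ (T ^ n) ⁻¹' V₂ with hW
  have hWopen : IsOpen W := hV₁.inter (hV₂.preimage (T ^ n).continuous)
  have hWne : W.Nonempty := ⟨x, hxV₁, hxV₂⟩
  -- Step 2: multiple recurrence on W
  obtain ⟨k, hk, y, hyW, hyrec⟩ := hmr W hWopen hWne m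
  -- The two recurrent points
  have hy₁ : ∀ j ≤ m, (T ^ (j * k)) y ∈ V₁ := fun j hj => (hyrec j hj).1
  have hy₂ : ∀ j ≤ m, (T ^ (j * k)) ((T ^ n) y) ∈ V₂ := by
    intro j hj
    have h := (hyrec j hj).2
    have : (T ^ (j * k)) ((T ^ n) y) = (T ^ n) ((T ^ (j * k)) y) := by
      rw [← ContinuousLinearMap.mul_apply, ← ContinuousLinearMap.mul_apply,
        ← pow_add, ← pow_add, Nat.add_comm]
    rw [this]
    exact h
  -- Step 3: open sets of points multiply recurrent into V₁, V₂
  set W₁ : Set X := ⋂ j ∈ Finset.range (m + 1), (T ^ (j * k)) ⁻¹' V₁ with hW₁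
  set W₂ : Set X := ⋂ j ∈ Finset.range (m + 1), (T ^ (j * k)) ⁻¹' V₂ with hW₂
  have hW₁open : IsOpen W₁ :=
    isOpen_biInter_finset fun j _ => hV₁.preimage (T ^ (j * k)).continuous
  have hW₂open : IsOpen W₂ :=
    isOpen_biInter_finset fun j _ => hV₂.preimage (T ^ (j * k)).continuous
  have hW₁ne : W₁.Nonempty := ⟨y, by
    simp only [hW₁, Set.mem_iInter, Set.mem_preimage, Finset.mem_range, Nat.lt_succ_iff]
    exact hy₁⟩
  have hW₂ne : W₂.Nonempty := ⟨(T ^ n) y, by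
    simp only [hW₂, Set.mem_iInter, Set.mem_preimage, Finset.mem_range, Nat.lt_succ_iff]
    exact hy₂⟩
  -- Step 4: weak mixing to land in W₁, W₂
  obtain ⟨a, ⟨x₁, hx₁U, hx₁W⟩, ⟨x₂, hx₂U, hx₂W⟩⟩ :=
    hwm U₁ U₂ W₁ W₂ hU₁ hU₁ne hU₂ hU₂ne hW₁open hW₁ne hW₂open hW₂ne
  refine ⟨x₁, hx₁U, x₂, hx₂U, a, k, hk, fun j hj => ?_⟩
  simp only [hW₁, hW₂, Set.mem_iInter, Set.mem_preimage, Finset.mem_range,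
    Nat.lt_succ_iff] at hx₁W hx₂W
  have key : ∀ z : X, (T ^ (a + j * k)) z = (T ^ (j * k)) ((T ^ a) z) := by
    intro z
    rw [← ContinuousLinearMap.mul_apply, ← pow_add, Nat.add_comm]
  rw [key x₁, key x₂]
  exact ⟨hx₁W j hj, hx₂W j hj⟩
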